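/- arXiv:1408.3298 — 2 statements merged into one kernel-verified Lean document; each statement's English description precedes it below -/
import Mathlib

section
/- Let K be an algebraically closed field of characteristic 0, and suppose f : U → K is a function on a subset U ⊆ K such that the graph of f is contained in the zero set of an irreducible polynomial F ∈ K[x,y] with F not of the form c(y − ax − b) (i.e., the curve is not a line), U is infinite, and f is differentiable on U in the sense that there is a function f' : U → K with ∂F/∂x(a, f(a)) + ∂F/∂y(a, f(a))·f'(a) = 0 and ∂F/∂y(a,f(a)) ≠ 0 for all a ∈ U. Then the image of the map a ↦ f'(a) on U is infinite. -/
open MvPolynomial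

private lemma dvd_sub_aeval {K : Type*} [CommRing K]
    (σ : Fin 2 → MvPolynomial (Fin 2) K) (D : MvPolynomial (Fin 2) K)
    (h : ∀ i, D ∣ X i - σ i) (p : MvPolynomial (Fin 2) K) :
    D ∣ p - aeval σ p := by
  induction p using MvPolynomial.induction_on with
  | C a => simp [aeval_C]
  | add p q hp hq => simpa [map_add, add_sub_add_comm] using dvd_add hp hq
  | mul_X p i hp =>
      have e : p * X i - aeval σ (p * X i)
          = (p - aeval σ p) * X i + aeval σ p * (X i - σ i) := by
        simp [map_mul]; ring
      rw [e]
      exact dvd_add (hp.mul_right _) ((h i).mul_left _)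

private lemma chain_rule {K : Type*} [CommRing K] (m b : K) (p : MvPolynomial (Fin 2) K) :
    Polynomial.derivative
        (aeval ![Polynomial.X, Polynomial.C m * Polynomial.X + Polynomial.C b] p)
      = aeval ![Polynomial.X, Polynomial.C m * Polynomial.X + Polynomial.C b] (pderiv 0 p)
        + Polynomial.C m *
          aeval ![Polynomial.X, Polynomial.C m * Polynomial.X + Polynomial.C b] (pderiv 1 p) := by
  induction p using MvPolynomial.induction_on with
  | C a => simp
  | add p q hp hq => simp only [map_add, hp, hq]; ring
  | mul_X p i hp =>
      have h00 : pderiv 0 (X 0 : MvPolynomial (Fin 2) K) = 1 := pderiv_X_self 0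
      have h11 : pderiv 1 (X 1 : MvPolynomial (Fin 2) K) = 1 := pderiv_X_self 1
      have h10 : pderiv 1 (X 0 : MvPolynomial (Fin 2) K) = 0 := pderiv_X_of_ne (by decide)
      have h01 : pderiv 0 (X 1 : MvPolynomial (Fin 2) K) = 0 := pderiv_X_of_ne (by decide)
      fin_cases i <;>
        simp only [map_mul, Polynomial.derivative_mul, hp, pderiv_mul, h00, h11, h10, h01,
          map_add, map_one, map_zero, aeval_X, Matrix.cons_val_zero, Matrix.cons_val_one,
          Matrix.head_cons, Fin.zero_eta, Fin.mk_one, mul_one, mul_zero, add_zero, zero_add,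
          Polynomial.derivative_X, Polynomial.derivative_add, Polynomial.derivative_C,
          Polynomial.derivative_one] <;>
        ring

theorem derivative_image_infinite_of_not_a_line
    {K : Type*} [Field K] [IsAlgClosed K] [CharZero K]
    (F : MvPolynomial (Fin 2) K) (hF : Irreducible F)
    (hnotline : ¬ ∃ c a b : K, F = C c * (X 1 - C a * X 0 - C b))
    (U : Set K) (hU : U.Infinite) (f f' : K → K)
    (hgraph : ∀ a ∈ U, eval ![a, f a] F = 0)
    (himplicit : ∀ a ∈ U,
      eval ![a, f a] (pderiv 0 F) + eval ![a, f a] (pderiv 1 F) * f' a = 0)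
    (hreg : ∀ a ∈ U, eval ![a, f a] (pderiv 1 F) ≠ 0) :
    (f' '' U).Infinite := by
  by_contra hinf
  rw [Set.not_infinite] at hinf
  -- the transfer isomorphism T : K[x,y] ≃ (K[y])[x]
  set T : MvPolynomial (Fin 2) K →ₐ[K] Polynomial (Polynomial K) :=
    aeval ![Polynomial.X, Polynomial.C Polynomial.X] with hTdef
  set g : Polynomial K →+* MvPolynomial (Fin 2) K :=
    (Polynomial.aeval (X 1 : MvPolynomial (Fin 2) K)).toRingHom with hgdef
  set Sv : Polynomial (Polynomial K) →+* MvPolynomial (Fin 2) K :=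
    Polynomial.eval₂RingHom g (X 0) with hSvdef
  have hST : Sv.comp T.toRingHom = RingHom.id _ := by
    apply MvPolynomial.ringHom_ext
    · intro r; simp [hTdef, hgdef, hSvdef, Polynomial.algebraMap_apply]
    · intro i; fin_cases i <;> simp [hTdef, hgdef, hSvdef]
  have hSvT : ∀ p, Sv (T p) = p := fun p => RingHom.congr_fun hST p
  have hgC : ∀ p : Polynomial K, T (g p) = Polynomial.C p := by
    intro p
    induction p using Polynomial.induction_on' with
    | add p q hp hq => simp only [map_add, hp, hq]
    | monomial n k =>
        have h1 : T (g (Polynomial.monomial n k))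
            = Polynomial.C (Polynomial.C k) * Polynomial.C Polynomial.X ^ n := by
          simp [hgdef, hTdef, Polynomial.aeval_monomial, Polynomial.algebraMap_apply]
        rw [h1, ← Polynomial.C_pow, ← map_mul, Polynomial.C_mul_X_pow_eq_monomial]
  have hTSv : ∀ p, T (Sv p) = p := by
    have : T.toRingHom.comp Sv = RingHom.id _ := by
      apply Polynomial.ringHom_ext
      · intro a; simp [hSvdef, hgC]
      · simp [hSvdef, hTdef]
    exact fun p => RingHom.congr_fun this p
  have hTinj : Function.Injective T := fun p q h => by
    rw [← hSvT p, ← hSvT q, h]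
  -- units of K[x,y] are constants
  have hunitC : ∀ w : MvPolynomial (Fin 2) K, IsUnit w → ∃ c : K, c ≠ 0 ∧ w = C c := by
    intro w hw
    obtain ⟨r, hr, hrw⟩ := Polynomial.isUnit_iff.mp (hw.map T)
    obtain ⟨c, hc, hcr⟩ := Polynomial.isUnit_iff.mp hr
    refine ⟨c, hc.ne_zero, ?_⟩
    rw [← hSvT w, ← hrw, ← hcr]
    simp [hSvdef, hgdef]
  -- if a "line polynomial" divides F we get a contradiction
  have hline : ∀ α β : K, (X 1 - C α * X 0 - C β : MvPolynomial (Fin 2) K) ∣ F → False := by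
    intro α β hdvd
    obtain ⟨w, hw⟩ := hdvd
    have hLnu : ¬ IsUnit (X 1 - C α * X 0 - C β : MvPolynomial (Fin 2) K) := by
      intro h
      have h2 := h.map (MvPolynomial.eval ![(0 : K), β])
      have h0 : (MvPolynomial.eval ![(0 : K), β]) (X 1 - C α * X 0 - C β) = 0 := by simp
      rw [h0] at h2
      exact not_isUnit_zero h2
    rcases hF.isUnit_or_isUnit hw with h | h
    · exact hLnu h
    · obtain ⟨c, hc0, hcw⟩ := hunitC _ h
      exact hnotline ⟨c, α, β, by rw [hw, hcw]; ring⟩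
  -- pigeonhole: f' is constant = m on an infinite subset S of U
  obtain ⟨m, hm⟩ : ∃ m : K, {a | a ∈ U ∧ f' a = m}.Infinite := by
    by_contra h
    push_neg at h
    have hsub : U ⊆ ⋃ v ∈ f' '' U, {a | a ∈ U ∧ f' a = v} := fun a ha =>
      Set.mem_biUnion (Set.mem_image_of_mem f' ha) ⟨ha, rfl⟩
    exact hU ((hinf.biUnion fun v _ => h v).subset hsub)
  set S : Set K := {a | a ∈ U ∧ f' a = m} with hSdef
  -- Case 1 : f takes some value y0 infinitely often on S
  by_cases hconst : ∃ y0 : K, {a | a ∈ S ∧ f a = y0}.Infinite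
  · obtain ⟨y0, hy0⟩ := hconst
    set q : Polynomial K := aeval ![Polynomial.X, Polynomial.C y0] F with hqdef
    have hq : ∀ a : K, q.eval a = eval ![a, y0] F := by
      intro a
      have hcomp : (Polynomial.evalRingHom a).comp
            ((aeval ![Polynomial.X, Polynomial.C y0] :
              MvPolynomial (Fin 2) K →ₐ[K] Polynomial K) : MvPolynomial (Fin 2) K →+* Polynomial K)
          = (eval ![a, y0] : MvPolynomial (Fin 2) K →+* K) := by
        apply MvPolynomial.ringHom_ext
        · intro r; simp
        · intro i; fin_cases i <;> simp
      exact RingHom.congr_fun hcomp F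
    have hq0 : q = 0 := by
      apply Polynomial.eq_zero_of_infinite_isRoot
      apply hy0.mono
      rintro a ⟨⟨haU, _⟩, hfa⟩
      simp only [Set.mem_setOf_eq, Polynomial.IsRoot.def, hq a, ← hfa]
      exact hgraph a haU
    have hdvd : (X 1 - C y0 : MvPolynomial (Fin 2) K) ∣ F := by
      have h1 : (X 1 - C y0 : MvPolynomial (Fin 2) K) ∣ F - aeval ![X 0, C y0] F := by
        apply dvd_sub_aeval
        intro i; fin_cases i <;> simp
      have hcomp : (Polynomial.aeval (X 0 : MvPolynomial (Fin 2) K)).comp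
            (aeval ![Polynomial.X, Polynomial.C y0])
          = aeval ![X 0, C y0] := by
        apply MvPolynomial.algHom_ext; intro i; fin_cases i <;> simp
      have h2 : aeval ![X 0, C y0] F = Polynomial.aeval (X 0 : MvPolynomial (Fin 2) K) q := by
        rw [hqdef]
        exact (AlgHom.congr_fun hcomp F).symm
      rw [h2, hq0] at h1
      simpa using h1
    exact hline 0 y0 (by simpa using hdvd)
  -- Case 2 : all fibers of f over S are finite
  push_neg at hconst
  set G : MvPolynomial (Fin 2) K := pderiv 0 F + C m * pderiv 1 F with hGdef
  have hGzero : ∀ a ∈ S, eval ![a, f a] G = 0 := by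
    rintro a ⟨haU, hfa⟩
    have h1 := himplicit a haU
    rw [hfa] at h1
    simp only [hGdef, map_add, map_mul, eval_C]
    linear_combination h1
  -- evaluation compatibility for T
  have heval : ∀ (a y : K) (p : MvPolynomial (Fin 2) K),
      Polynomial.eval₂ (Polynomial.evalRingHom y) a (T p) = eval ![a, y] p := by
    intro a y p
    have hcomp : (Polynomial.eval₂RingHom (Polynomial.evalRingHom y) a).comp T.toRingHom
        = (eval ![a, y] : MvPolynomial (Fin 2) K →+* K) := by
      apply MvPolynomial.ringHom_ext
      · intro r; simp [hTdef, Polynomial.algebraMap_apply]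
      · intro i; fin_cases i <;> simp [hTdef]
    exact RingHom.congr_fun hcomp p
  have hF0 : F ≠ 0 := hF.ne_zero
  have hTF0 : T F ≠ 0 := fun h => hF0 (by rw [← hSvT F, h, map_zero])
  -- the x-degree of F is positive
  have hdegT : (T F).natDegree ≠ 0 := by
    intro h0
    have hTFC := Polynomial.eq_C_of_natDegree_eq_zero h0
    set p : Polynomial K := (T F).coeff 0 with hpdef
    have hFg : F = g p := by rw [← hSvT F, hTFC]; simp [hSvdef]
    have hp0 : p ≠ 0 := fun h => hF0 (by rw [hFg, h, map_zero])
    rcases Nat.eq_zero_or_pos p.natDegree with hd0 | hdpos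
    · have hpc := Polynomial.eq_C_of_natDegree_eq_zero hd0
      have hc0 : p.coeff 0 ≠ 0 := fun h => hp0 (by rw [hpc, h, map_zero])
      apply hF.not_isUnit
      rw [hFg, hpc]
      have : g (Polynomial.C (p.coeff 0)) = C (p.coeff 0) := by simp [hgdef]
      rw [this]
      exact (isUnit_iff_ne_zero.mpr hc0).map (MvPolynomial.C : K →+* MvPolynomial (Fin 2) K)
    · obtain ⟨r, hr⟩ := IsAlgClosed.exists_root p (by
        intro hdeg
        rw [Polynomial.degree_eq_natDegree hp0] at hdeg
        exact_mod_cast absurd (by exact_mod_cast hdeg : p.natDegree = 0) hdpos.ne')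
      have hdvdp : (Polynomial.X - Polynomial.C r) ∣ p := Polynomial.dvd_iff_isRoot.mpr hr
      have : g (Polynomial.X - Polynomial.C r) ∣ g p := map_dvd g hdvdp
      rw [← hFg] at this
      have hgl : g (Polynomial.X - Polynomial.C r) = X 1 - C r := by simp [hgdef]
      rw [hgl] at this
      exact hline 0 r (by simpa using this)
  -- irreducibility of T F
  have hTF_irr : Irreducible (T F) := by
    constructor
    · intro hu
      exact hF.not_isUnit (by simpa [hSvT] using hu.map Sv)
    · intro a b hab
      have hFab : F = Sv a * Sv b := by
        rw [← hSvT F, hab, map_mul]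
      rcases hF.isUnit_or_isUnit hFab with h | h
      · left
        simpa [RingHom.coe_coe, hTSv] using
          h.map (T : MvPolynomial (Fin 2) K →+* Polynomial (Polynomial K))
      · right
        simpa [RingHom.coe_coe, hTSv] using
          h.map (T : MvPolynomial (Fin 2) K →+* Polynomial (Polynomial K))
  -- primitivity of T F
  have hprim : (T F).IsPrimitive := by
    intro r hr
    obtain ⟨w, hw⟩ := hr
    have hFrw : F = Sv (Polynomial.C r) * Sv w := by
      rw [← hSvT F, hw, map_mul]
    rcases hF.isUnit_or_isUnit hFrw with h | h
    · have h2 : IsUnit (Polynomial.C r) := by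
        simpa [RingHom.coe_coe, hTSv] using
          h.map (T : MvPolynomial (Fin 2) K →+* Polynomial (Polynomial K))
      exact Polynomial.isUnit_C.mp h2
    · exfalso
      have hwu : IsUnit w := by
        simpa [RingHom.coe_coe, hTSv] using
          h.map (T : MvPolynomial (Fin 2) K →+* Polynomial (Polynomial K))
      have hr0 : r ≠ 0 := by
        intro h0
        apply hTF0
        rw [hw, h0, Polynomial.C_0, zero_mul]
      have hw0 : w ≠ 0 := hwu.ne_zero
      apply hdegT
      rw [hw, Polynomial.natDegree_mul (Polynomial.C_ne_zero.mpr hr0) hw0,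
        Polynomial.natDegree_C, Polynomial.natDegree_eq_zero_of_isUnit hwu]
  -- pass to the fraction field K(y)
  letI : DecidableEq K := Classical.decEq K
  set K' := FractionRing (Polynomial K) with hK'def
  set Fq : Polynomial K' := (T F).map (algebraMap (Polynomial K) K') with hFqdef
  set Gq : Polynomial K' := (T G).map (algebraMap (Polynomial K) K') with hGqdef
  have hFq_irr : Irreducible Fq :=
    (hprim.irreducible_iff_irreducible_map_fraction_map).mp hTF_irr
  have halginj : Function.Injective (algebraMap (Polynomial K) K') :=
    IsFractionRing.injective _ _
  have hmapinj : Function.Injective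
      (Polynomial.map (algebraMap (Polynomial K) K')) :=
    Polynomial.map_injective _ halginj
  have hFdvdG : F ∣ G := by
    by_cases hdvdq : Fq ∣ Gq
    · -- F divides G after clearing denominators
      obtain ⟨Hq, hHq⟩ := hdvdq
      obtain ⟨c, hc⟩ := IsLocalization.integerNormalization_map_to_map
        (nonZeroDivisors (Polynomial K)) Hq
      have hc0 : (c : Polynomial K) ≠ 0 := nonZeroDivisors.ne_zero c.2
      have key : Polynomial.C (c : Polynomial K) * T G
          = T F * IsLocalization.integerNormalization (nonZeroDivisors (Polynomial K)) Hq := by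
        apply hmapinj
        rw [Polynomial.map_mul, Polynomial.map_mul, Polynomial.map_C, hc, ← hGqdef, ← hFqdef,
          hHq, Algebra.smul_def, Polynomial.algebraMap_apply]
        ring
      have hprime : Prime (T F) := UniqueFactorizationMonoid.irreducible_iff_prime.mp hTF_irr
      have hdvd2 : T F ∣ Polynomial.C (c : Polynomial K) * T G := Dvd.intro _ key.symm
      rcases hprime.2.2 _ _ hdvd2 with h | h
      · exfalso
        obtain ⟨w, hw⟩ := h
        have hCc : (Polynomial.C (c : Polynomial K)) ≠ 0 := Polynomial.C_ne_zero.mpr hc0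
        have hw0 : w ≠ 0 := by
          intro h0; rw [h0, mul_zero] at hw; exact hCc hw
        apply hdegT
        have := congrArg Polynomial.natDegree hw
        rw [Polynomial.natDegree_C, Polynomial.natDegree_mul hTF0 hw0] at this
        omega
      · obtain ⟨W, hW⟩ := h
        refine ⟨Sv W, ?_⟩
        apply hTinj
        rw [map_mul, hW]
        rw [show T (Sv W) = W from hTSv W]
    · -- otherwise Fq and Gq are coprime, contradiction with the common zeros
      exfalso
      have hcop : IsCoprime Fq Gq := (hFq_irr.coprime_iff_not_dvd).mpr hdvdq
      obtain ⟨p, q, hpq⟩ := hcop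
      obtain ⟨b₁, hb₁⟩ := IsLocalization.integerNormalization_map_to_map
        (nonZeroDivisors (Polynomial K)) p
      obtain ⟨b₂, hb₂⟩ := IsLocalization.integerNormalization_map_to_map
        (nonZeroDivisors (Polynomial K)) q
      set P₁ := IsLocalization.integerNormalization (nonZeroDivisors (Polynomial K)) p with hP₁
      set Q₁ := IsLocalization.integerNormalization (nonZeroDivisors (Polynomial K)) q with hQ₁
      have key : P₁ * T F * Polynomial.C (b₂ : Polynomial K)
          + Q₁ * T G * Polynomial.C (b₁ : Polynomial K)
          = Polynomial.C ((b₁ : Polynomial K) * (b₂ : Polynomial K)) := by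
        apply hmapinj
        rw [Polynomial.map_add, Polynomial.map_mul, Polynomial.map_mul, Polynomial.map_mul,
          Polynomial.map_mul, Polynomial.map_C, Polynomial.map_C, Polynomial.map_C, hb₁, hb₂,
          ← hGqdef, ← hFqdef, Algebra.smul_def, Algebra.smul_def, Polynomial.algebraMap_apply,
          Polynomial.algebraMap_apply, map_mul, Polynomial.C_mul]
        linear_combination (Polynomial.C (algebraMap (Polynomial K) K' (b₁ : Polynomial K)) *
          Polynomial.C (algebraMap (Polynomial K) K' (b₂ : Polynomial K))) * hpq
      set P0 : Polynomial K := (b₁ : Polynomial K) * (b₂ : Polynomial K) with hP0def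
      have hP0 : P0 ≠ 0 :=
        mul_ne_zero (nonZeroDivisors.ne_zero b₁.2) (nonZeroDivisors.ne_zero b₂.2)
      have hbadfin : (⋃ r ∈ (P0.roots.toFinset : Finset K), {a | a ∈ S ∧ f a = r}).Finite :=
        Set.Finite.biUnion (P0.roots.toFinset.finite_toSet) (fun r _ => hconst r)
      obtain ⟨a, haS, habad⟩ := (hm.diff hbadfin).nonempty
      have haU : a ∈ U := haS.1
      have hev := congrArg (Polynomial.eval₂ (Polynomial.evalRingHom (f a)) a) key
      simp only [Polynomial.eval₂_add, Polynomial.eval₂_mul, Polynomial.eval₂_C, heval] at hev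
      rw [hgraph a haU, hGzero a haS] at hev
      have hroot : P0.eval (f a) = 0 := by
        have : (Polynomial.evalRingHom (f a)) P0 = P0.eval (f a) := rfl
        rw [← this, ← hev]
        ring
      apply habad
      have hmem : f a ∈ (P0.roots.toFinset : Finset K) := by
        rw [Multiset.mem_toFinset, Polynomial.mem_roots hP0]
        exact hroot
      exact Set.mem_biUnion hmem ⟨haS, rfl⟩
  -- final step : restrict F to the line y = m x + b through a point of the curve
  obtain ⟨a₀, ha₀⟩ := hm.nonempty
  set bb : K := f a₀ - m * a₀ with hbdef
  obtain ⟨W, hW⟩ := hFdvdG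
  set u : Polynomial K :=
    aeval ![Polynomial.X, Polynomial.C m * Polynomial.X + Polynomial.C bb] F with hudef
  have hu' : Polynomial.derivative u
      = u * aeval ![Polynomial.X, Polynomial.C m * Polynomial.X + Polynomial.C bb] W := by
    rw [hudef, chain_rule]
    have h1 : (aeval ![Polynomial.X, Polynomial.C m * Polynomial.X + Polynomial.C bb])
          ((pderiv 0) F)
        + Polynomial.C m * (aeval ![Polynomial.X, Polynomial.C m * Polynomial.X +
            Polynomial.C bb]) ((pderiv 1) F)
        = (aeval ![Polynomial.X, Polynomial.C m * Polynomial.X + Polynomial.C bb]) G := by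
      rw [hGdef, map_add, map_mul]
      congr 2
      simp [Polynomial.algebraMap_apply]
    rw [h1, hW, map_mul]
  have heval0 : u.eval a₀ = 0 := by
    have hcomp : (Polynomial.evalRingHom a₀).comp
          ((aeval ![Polynomial.X, Polynomial.C m * Polynomial.X + Polynomial.C bb] :
            MvPolynomial (Fin 2) K →ₐ[K] Polynomial K) :
              MvPolynomial (Fin 2) K →+* Polynomial K)
        = (eval ![a₀, m * a₀ + bb] : MvPolynomial (Fin 2) K →+* K) := by
      apply MvPolynomial.ringHom_ext
      · intro r; simp
      · intro i; fin_cases i <;> simp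
    have h3 := RingHom.congr_fun hcomp F
    simp only [RingHom.coe_comp, Function.comp_apply, RingHom.coe_coe,
      Polynomial.coe_evalRingHom] at h3
    rw [← hudef] at h3
    rw [h3, show m * a₀ + bb = f a₀ by rw [hbdef]; ring]
    exact hgraph a₀ ha₀.1
  have hu0 : u = 0 := by
    by_contra hne
    have hconstcase : u.natDegree = 0 → False := by
      intro h0
      have hC := Polynomial.eq_C_of_natDegree_eq_zero h0
      apply hne
      have hc0 : u.coeff 0 = 0 := by
        have h4 := heval0
        rw [hC] at h4
        simpa using h4
      rw [hC, hc0, map_zero]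
    by_cases hw : aeval ![Polynomial.X, Polynomial.C m * Polynomial.X + Polynomial.C bb] W = 0
    · rw [hw, mul_zero] at hu'
      exact hconstcase (Polynomial.natDegree_eq_zero_of_derivative_eq_zero hu')
    · rcases Nat.eq_zero_or_pos u.natDegree with h0 | hpos
      · exact hconstcase h0
      · have hlt := Polynomial.natDegree_derivative_lt hpos.ne'
        rw [hu', Polynomial.natDegree_mul hne hw] at hlt
        omega
  have hdvdF : (X 1 - C m * X 0 - C bb : MvPolynomial (Fin 2) K) ∣ F := by
    have h1 : (X 1 - C m * X 0 - C bb : MvPolynomial (Fin 2) K)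
        ∣ F - aeval ![X 0, C m * X 0 + C bb] F := by
      apply dvd_sub_aeval
      intro i; fin_cases i
      · simp
      · refine dvd_of_eq ?_
        show (X 1 - C m * X 0 - C bb : MvPolynomial (Fin 2) K) = X 1 - (C m * X 0 + C bb)
        ring
    have hcomp : (Polynomial.aeval (X 0 : MvPolynomial (Fin 2) K)).comp
          (aeval ![Polynomial.X, Polynomial.C m * Polynomial.X + Polynomial.C bb])
        = aeval ![X 0, C m * X 0 + C bb] := by
      apply MvPolynomial.algHom_ext; intro i; fin_cases i <;> simp
    have h2 : aeval ![X 0, C m * X 0 + C bb] F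
        = Polynomial.aeval (X 0 : MvPolynomial (Fin 2) K) u := by
      rw [hudef]
      exact (AlgHom.congr_fun hcomp F).symm
    rw [h2, hu0] at h1
    simpa using h1
  exact hline m bb hdvdF
end

section
/- Let K be a complete non-Archimedean valued field, U ⊆ K×K open, F : U → K analytic, and (a,b) ∈ U with F(a,b) = 0 and ∂F/∂y(a,b) ≠ 0. Then there exist open sets U_x, U_y ⊆ K with (a,b) ∈ U_x × U_y ⊆ U and an analytic function f : U_x → U_y such that {(x,y) ∈ U_x × U_y : F(x,y) = 0} = {(x, f(x)) : x ∈ U_x}. -/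
theorem nonarchimedean_implicit_function_theorem
    {K : Type*} [NontriviallyNormedField K] [CompleteSpace K] [IsUltrametricDist K]
    (U : Set (K × K)) (hU : IsOpen U) (F : K × K → K)
    (hF : AnalyticOnNhd K F U)
    (a b : K) (hab : (a, b) ∈ U) (hFab : F (a, b) = 0)
    (hdy : fderiv K F (a, b) (0, 1) ≠ 0) :
    ∃ Ux Uy : Set K, IsOpen Ux ∧ IsOpen Uy ∧ a ∈ Ux ∧ b ∈ Uy ∧
      Ux ×ˢ Uy ⊆ U ∧
      ∃ f : K → K, AnalyticOnNhd K f Ux ∧ (∀ x ∈ Ux, f x ∈ Uy) ∧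
        {v ∈ Ux ×ˢ Uy | F v = 0} = (fun x => (x, f x)) '' Ux := by
  classical
  set A : K × K →L[K] K := fderiv K F (a, b) with hA
  set c : K := A (1, 0) with hc
  set d : K := A (0, 1) with hdd
  have hd0 : d ≠ 0 := hdy
  have hAapp : ∀ u v : K, A (u, v) = u * c + v * d := by
    intro u v
    have h : (u, v) = u • ((1 : K), (0 : K)) + v • ((0 : K), (1 : K)) := by
      simp [Prod.ext_iff]
    rw [h, map_add, map_smul, map_smul, smul_eq_mul, smul_eq_mul]
  set L : K × K →L[K] K × K := (ContinuousLinearMap.fst K K K).prod A with hL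
  set M : K × K →L[K] K × K :=
    (ContinuousLinearMap.fst K K K).prod
      (d⁻¹ • (ContinuousLinearMap.snd K K K - c • ContinuousLinearMap.fst K K K)) with hM
  have hML : Function.LeftInverse M L := by
    rintro ⟨u, v⟩
    simp only [hL, hM, ContinuousLinearMap.prod_apply, ContinuousLinearMap.coe_fst',
      ContinuousLinearMap.smul_apply, ContinuousLinearMap.sub_apply,
      ContinuousLinearMap.coe_snd', ContinuousLinearMap.coe_smul', Pi.smul_apply,
      smul_eq_mul, hAapp]
    refine Prod.ext rfl ?_
    field_simp
    ring
  have hLM : Function.RightInverse M L := by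
    rintro ⟨x, z⟩
    simp only [hL, hM, ContinuousLinearMap.prod_apply, ContinuousLinearMap.coe_fst',
      ContinuousLinearMap.smul_apply, ContinuousLinearMap.sub_apply,
      ContinuousLinearMap.coe_snd', ContinuousLinearMap.coe_smul', Pi.smul_apply,
      smul_eq_mul, hAapp]
    refine Prod.ext rfl ?_
    field_simp
    ring
  set e : (K × K) ≃L[K] (K × K) := ContinuousLinearEquiv.equivOfInverse L M hML hLM with he
  set G : K × K → K × K := fun p => (p.1, F p) with hGdef
  have hFs : HasStrictFDerivAt F A (a, b) := (hF _ hab).hasStrictFDerivAt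
  have hG : HasStrictFDerivAt G (e : (K × K) →L[K] (K × K)) (a, b) :=
    HasStrictFDerivAt.prodMk hasStrictFDerivAt_fst hFs
  set φ : OpenPartialHomeomorph (K × K) (K × K) := HasStrictFDerivAt.toOpenPartialHomeomorph G hG with hφ
  have hφcoe : ⇑φ = G := HasStrictFDerivAt.toOpenPartialHomeomorph_coe hG
  have hsrc : (a, b) ∈ φ.source := HasStrictFDerivAt.mem_toOpenPartialHomeomorph_source hG
  have hφab : φ (a, b) = (a, 0) := by rw [hφcoe]; simp [hGdef, hFab]
  have hGanal : ∀ p ∈ U, AnalyticAt K G p := fun p hp => analyticAt_fst.prod (hF p hp)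
  have hfd : fderiv K (⇑φ) (a, b) = (e : (K × K) →L[K] (K × K)) := by
    rw [hφcoe]; exact hG.hasFDerivAt.fderiv
  have hsymm : AnalyticAt K φ.symm (a, 0) := by
    have h1 := φ.analyticAt_symm' hsrc (by rw [hφcoe]; exact hGanal _ hab) hfd
    rwa [hφab] at h1
  set S : Set (K × K) := U ∩ φ.source with hSdef
  have hSopen : IsOpen S := hU.inter φ.open_source
  have habS : (a, b) ∈ S := ⟨hab, hsrc⟩
  set T : Set (K × K) := (φ.target ∩ φ.symm ⁻¹' S) ∩ {q | AnalyticAt K φ.symm q} with hTdef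
  have hTopen : IsOpen T := (φ.isOpen_inter_preimage_symm hSopen).inter (isOpen_analyticAt K φ.symm)
  have hsymm_ab : φ.symm (a, 0) = (a, b) := by
    have := φ.left_inv hsrc; rwa [hφab] at this
  have ha0T : (a, 0) ∈ T := by
    refine ⟨⟨?_, ?_⟩, hsymm⟩
    · have := φ.map_source hsrc; rwa [hφab] at this
    · simp only [Set.mem_preimage, hsymm_ab]; exact habS
  obtain ⟨Vx, Vz, hVxo, hVzo, haVx, h0Vz, hVT⟩ := isOpen_prod_iff.1 hTopen a 0 ha0T
  obtain ⟨Wx, Wy, hWxo, hWyo, haWx, hbWy, hWS⟩ := isOpen_prod_iff.1 hSopen a b habS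
  have hT' : ∀ x ∈ Vx, (x, (0 : K)) ∈ T := fun x hx => hVT ⟨hx, h0Vz⟩
  set f : K → K := fun x => (φ.symm (x, 0)).2 with hfdef
  have hfa : f a = b := by rw [hfdef]; simp [hsymm_ab]
  have hfan : ∀ x ∈ Vx, AnalyticAt K f x := by
    intro x hx
    have h1 : AnalyticAt K (fun x : K => (x, (0 : K))) x :=
      analyticAt_id.prod analyticAt_const
    have h2 : AnalyticAt K φ.symm (x, 0) := (hT' x hx).2
    have h3 : AnalyticAt K (fun x : K => φ.symm (x, 0)) x := AnalyticAt.comp_of_eq h2 h1 rfl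
    exact analyticAt_snd.comp h3
  -- key: for x with (x,0) ∈ T, the point φ.symm (x,0) is in S, equals (x, f x), and F vanishes
  have key : ∀ x ∈ Vx, φ.symm (x, 0) = (x, f x) ∧ φ.symm (x, 0) ∈ S ∧ F (x, f x) = 0 := by
    intro x hx
    obtain ⟨⟨htar, hpre⟩, -⟩ := hT' x hx
    have hpS : φ.symm (x, 0) ∈ S := hpre
    have hright : φ (φ.symm (x, 0)) = (x, 0) := φ.right_inv htar
    rw [hφcoe] at hright
    have h1 : (φ.symm (x, 0)).1 = x := congrArg Prod.fst hright
    have h2 : F (φ.symm (x, 0)) = 0 := congrArg Prod.snd hright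
    have heq : φ.symm (x, 0) = (x, f x) := by
      rw [hfdef]; exact Prod.ext h1 rfl
    refine ⟨heq, hpS, ?_⟩
    rwa [heq] at h2
  set Ux : Set K := (Vx ∩ Wx) ∩ f ⁻¹' Wy with hUxdef
  have hUxopen : IsOpen Ux := by
    have hcont : ContinuousOn f (Vx ∩ Wx) := fun x hx =>
      (hfan x hx.1).continuousAt.continuousWithinAt
    exact hcont.isOpen_inter_preimage (hVxo.inter hWxo) hWyo
  have haUx : a ∈ Ux := ⟨⟨haVx, haWx⟩, by simp only [Set.mem_preimage, hfa]; exact hbWy⟩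
  refine ⟨Ux, Wy, hUxopen, hWyo, haUx, hbWy, ?_, f, ?_, ?_, ?_⟩
  · intro p hp
    exact (hWS ⟨hp.1.1.2, hp.2⟩).1
  · exact fun x hx => hfan x hx.1.1
  · exact fun x hx => hx.2
  · ext ⟨x, y⟩
    constructor
    · rintro ⟨⟨hxUx, hyWy⟩, hF0⟩
      refine ⟨x, hxUx, ?_⟩
      have hmemS : (x, y) ∈ S := hWS ⟨hxUx.1.2, hyWy⟩
      have hφxy : φ (x, y) = (x, 0) := by
        rw [hφcoe]; simp only [hGdef]
        exact Prod.ext rfl hF0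
      have hleft : φ.symm (x, 0) = (x, y) := by
        have := φ.left_inv hmemS.2; rwa [hφxy] at this
      have hfxy : f x = y := by
        show (φ.symm (x, 0)).2 = y
        rw [hleft]
      simp only
      exact Prod.ext rfl hfxy
    · rintro ⟨x, hx, hxe⟩
      rw [← hxe]
      exact ⟨⟨hx, hx.2⟩, (key x hx.1.1).2.2⟩
end
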